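/- Let H = (V, E, ω) be a hypergraph with distinct vertices s, t ∈ V and let N_L be its Lawler network. For every (s,t)-cut (𝒮, 𝒱∖𝒮) of N_L of finite capacity, setting S := 𝒮 ∩ V, the capacity of the cut is at least the cut weight of the bipartition (S, V∖S) of H, i.e., at least Σ{ω(e) : e ∈ E, e ∩ S ≠ ∅ and e ∖ S ≠ ∅}. Moreover, for every net e split by S, the bridging edge (e′, e″) is a cut edge, i.e., e′ ∈ 𝒮 and e″ ∉ 𝒮. -/

import Mathlib

open scoped ENNReal

/-- Capacities of the Lawler network of a hypergraph: nodes are the hypernodes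
(`Sum.inl`) together with two bridging nodes per net (`Sum.inr (e, false)` is `e′`,
`Sum.inr (e, true)` is `e″`). -/
noncomputable def lawlerCap {V E : Type} [DecidableEq V] [DecidableEq E]
    (pins : E → Finset V) (ω : E → ℝ) :
    V ⊕ E × Bool → V ⊕ E × Bool → ℝ≥0∞
  | Sum.inl p, Sum.inr (e, false) => if p ∈ pins e then ⊤ else 0
  | Sum.inr (e, false), Sum.inr (e', true) => if e = e' then ENNReal.ofReal (ω e) else 0
  | Sum.inr (e, true), Sum.inl p => if p ∈ pins e then ⊤ else 0
  | _, _ => 0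

/-- `f` is an `(s,t)`-flow for the capacity function `c`. -/
def IsFlow {ν : Type} [Fintype ν] (c : ν → ν → ℝ≥0∞) (s t : ν) (f : ν → ν → ℝ) : Prop :=
  (∀ u v, (f u v : EReal) ≤ (c u v : EReal)) ∧
  (∀ u v, f u v = - f v u) ∧
  (∀ u, u ≠ s → u ≠ t → ∑ v, f u v = 0)

/-- The value of a flow. -/
noncomputable def flowValue {ν : Type} [Fintype ν] (f : ν → ν → ℝ) (s : ν) : ℝ :=
  ∑ v, f s v

/-- `f` is a maximum `(s,t)`-flow. -/
def IsMaxFlow {ν : Type} [Fintype ν] (c : ν → ν → ℝ≥0∞) (s t : ν) (f : ν → ν → ℝ) : Prop :=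
  IsFlow c s t f ∧ ∀ g, IsFlow c s t g → flowValue g s ≤ flowValue f s

/-- `(u,v)` is an edge of the residual network, i.e. `r_f(u,v) = c(u,v) - f(u,v) > 0`. -/
def ResidualEdge {ν : Type} (c : ν → ν → ℝ≥0∞) (f : ν → ν → ℝ) (u v : ν) : Prop :=
  (f u v : EReal) < (c u v : EReal)

open scoped Classical in
/-- The capacity of the `(s,t)`-cut `(S, 𝒱 ∖ S)`. -/
noncomputable def cutCap {ν : Type} [Fintype ν] (c : ν → ν → ℝ≥0∞) (S : Set ν) : ℝ≥0∞ :=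
  ∑ u, ∑ v, if u ∈ S ∧ v ∉ S then c u v else 0

open scoped Classical in
/-- The cut weight of the bipartition `(S, V ∖ S)` of a hypergraph: the total
weight of all nets split by `S`. -/
noncomputable def hypCutWeight {V E : Type} [Fintype E]
    (pins : E → Finset V) (ω : E → ℝ) (S : Set V) : ℝ :=
  ∑ e, if (∃ p ∈ pins e, p ∈ S) ∧ (∃ p ∈ pins e, p ∉ S) then ω e else 0


open scoped Classical in
lemma cutCap_single_le {ν : Type} [Fintype ν] (c : ν → ν → ℝ≥0∞) (S : Set ν)
    (u v : ν) (hu : u ∈ S) (hv : v ∉ S) : c u v ≤ cutCap c S := by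
  unfold cutCap
  calc c u v = (if u ∈ S ∧ v ∉ S then c u v else 0) := by simp [hu, hv]
    _ ≤ ∑ v, if u ∈ S ∧ v ∉ S then c u v else 0 :=
        Finset.single_le_sum (f := fun v => if u ∈ S ∧ v ∉ S then c u v else 0)
          (fun _ _ => zero_le) (Finset.mem_univ v)
    _ ≤ _ := Finset.single_le_sum (f := fun u => ∑ v, if u ∈ S ∧ v ∉ S then c u v else 0)
        (fun _ _ => zero_le) (Finset.mem_univ u)

/-- Every finite-capacity `(s,t)`-cut `(𝒮, 𝒱 ∖ 𝒮)` of the Lawler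
network has capacity at least the cut weight of the bipartition `(𝒮 ∩ V, V ∖ 𝒮)` of the
hypergraph; moreover, for every net `e` split by `𝒮 ∩ V`, the bridging edge `(e′, e″)`
is a cut edge. -/
theorem lawler_cut_cap_ge_hyp_cut_weight
    {V E : Type} [Fintype V] [Fintype E] [DecidableEq V] [DecidableEq E]
    (pins : E → Finset V) (ω : E → ℝ) (hω : ∀ e, 0 < ω e)
    (s t : V) (hst : s ≠ t)
    (𝒮 : Set (V ⊕ E × Bool)) (hs : Sum.inl s ∈ 𝒮) (ht : Sum.inl t ∉ 𝒮)
    (hfin : cutCap (lawlerCap pins ω) 𝒮 ≠ ⊤) :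
    ENNReal.ofReal (hypCutWeight pins ω {v : V | Sum.inl v ∈ 𝒮}) ≤
        cutCap (lawlerCap pins ω) 𝒮 ∧
    ∀ e : E, (∃ p ∈ pins e, Sum.inl p ∈ 𝒮) → (∃ p ∈ pins e, Sum.inl p ∉ 𝒮) →
      Sum.inr (e, false) ∈ 𝒮 ∧ Sum.inr (e, true) ∉ 𝒮 := by
  classical
  have key : ∀ e : E, (∃ p ∈ pins e, Sum.inl p ∈ 𝒮) → (∃ p ∈ pins e, Sum.inl p ∉ 𝒮) →
      Sum.inr (e, false) ∈ 𝒮 ∧ Sum.inr (e, true) ∉ 𝒮 := by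
    rintro e ⟨p, hp, hpS⟩ ⟨q, hq, hqS⟩
    constructor
    · by_contra h
      have h1 : lawlerCap pins ω (Sum.inl p) (Sum.inr (e, false)) = ⊤ := by
        simp [lawlerCap, hp]
      have := cutCap_single_le (lawlerCap pins ω) 𝒮 _ _ hpS h
      rw [h1] at this
      exact hfin (top_le_iff.mp this)
    · by_contra h
      have h1 : lawlerCap pins ω (Sum.inr (e, true)) (Sum.inl q) = ⊤ := by
        simp [lawlerCap, hq]
      have := cutCap_single_le (lawlerCap pins ω) 𝒮 _ _ h hqS
      rw [h1] at this
      exact hfin (top_le_iff.mp this)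
  refine ⟨?_, key⟩
  have hb : ∀ e : E,
      (if (∃ p ∈ pins e, Sum.inl p ∈ 𝒮) ∧ (∃ p ∈ pins e, Sum.inl p ∉ 𝒮)
        then ENNReal.ofReal (ω e) else 0)
      ≤ ∑ v, if Sum.inr (e, false) ∈ 𝒮 ∧ v ∉ 𝒮
          then lawlerCap pins ω (Sum.inr (e, false)) v else 0 := by
    intro e
    by_cases hsplit : (∃ p ∈ pins e, Sum.inl p ∈ 𝒮) ∧ (∃ p ∈ pins e, Sum.inl p ∉ 𝒮)
    · obtain ⟨h1, h2⟩ := key e hsplit.1 hsplit.2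
      calc (if (∃ p ∈ pins e, Sum.inl p ∈ 𝒮) ∧ (∃ p ∈ pins e, Sum.inl p ∉ 𝒮)
              then ENNReal.ofReal (ω e) else 0)
          = (if Sum.inr (e, false) ∈ 𝒮 ∧ (Sum.inr (e, true) : V ⊕ E × Bool) ∉ 𝒮
              then lawlerCap pins ω (Sum.inr (e, false)) (Sum.inr (e, true)) else 0) := by
            simp [hsplit, h1, h2, lawlerCap]
        _ ≤ _ := Finset.single_le_sum
            (f := fun v => if Sum.inr (e, false) ∈ 𝒮 ∧ v ∉ 𝒮
              then lawlerCap pins ω (Sum.inr (e, false)) v else 0)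
            (fun _ _ => zero_le) (Finset.mem_univ (Sum.inr (e, true)))
    · simp [hsplit]
  calc ENNReal.ofReal (hypCutWeight pins ω {v : V | Sum.inl v ∈ 𝒮})
      ≤ ∑ e, if (∃ p ∈ pins e, Sum.inl p ∈ 𝒮) ∧ (∃ p ∈ pins e, Sum.inl p ∉ 𝒮)
          then ENNReal.ofReal (ω e) else 0 := by
        unfold hypCutWeight
        rw [ENNReal.ofReal_sum_of_nonneg (fun e _ => by split <;> simp [(hω e).le])]
        refine Finset.sum_le_sum fun e _ => ?_
        by_cases h : (∃ p ∈ pins e, Sum.inl p ∈ 𝒮) ∧ (∃ p ∈ pins e, Sum.inl p ∉ 𝒮)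
        · simp [h]
        · simp [h]
    _ ≤ ∑ e, ∑ v, if Sum.inr (e, false) ∈ 𝒮 ∧ v ∉ 𝒮
          then lawlerCap pins ω (Sum.inr (e, false)) v else 0 :=
        Finset.sum_le_sum fun e _ => hb e
    _ ≤ cutCap (lawlerCap pins ω) 𝒮 := by
        unfold cutCap
        rw [Fintype.sum_sum_type]
        refine le_add_of_nonneg_of_le (zero_le) ?_
        rw [Fintype.sum_prod_type]
        refine Finset.sum_le_sum fun e _ => ?_
        rw [Fintype.sum_bool]
        exact le_add_of_nonneg_of_le (zero_le) le_rfl
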